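/- Let s and t be integers with t ≥ s. (a) If s ≥ 4 and at least one of s and t is even, then there exist a constant c > 0 and a natural number n₀ such that for all n ≥ n₀, c·n² ≤ r(K_{n,n}, K_{s,t}, st - ⌊(s+t)/2⌋ + 3) ≤ n². (b) If s ≥ 5 and both s and t are odd, then there exist a constant c > 0 and a natural number n₀ such that for all n ≥ n₀, c·n² ≤ r(K_{n,n}, K_{s,t}, st - ⌊(s+t)/2⌋ + 4) ≤ n². -/

import Mathlib

open Finset

/-- `rBip n s t q` is the bipartite Erdős–Gyárfás function `r(K_{n,n}, K_{s,t}, q)`: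
the minimum number of colors in an edge-coloring of `K_{n,n}` such that every copy of
`K_{s,t}` (with its part of size `s` in either side of the bipartition) receives at
least `q` distinct colors on its edges. -/
noncomputable def rBip (n s t q : ℕ) : ℕ :=
  sInf {k : ℕ | ∃ c : Fin n → Fin n → ℕ,
    (∀ a b, c a b < k) ∧
    ∀ A B : Finset (Fin n),
      (A.card = s ∧ B.card = t) ∨ (A.card = t ∧ B.card = s) →
      q ≤ ((A ×ˢ B).image fun p => c p.1 p.2).card}

/- ### Auxiliary lemmas for the lower bound -/

/-- Deletion lemma: if every cell of `D ⊆ E` has a same-colored witness in `E \ D`, then the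
number of colors of `E` is at most `E.card - D.card`. -/
private lemma delImage {n : ℕ} (c : Fin n → Fin n → ℕ) (E D : Finset (Fin n × Fin n))
    (hDE : D ⊆ E)
    (hwit : ∀ z ∈ D, ∃ z', z' ∈ E ∧ z' ∉ D ∧ c z'.1 z'.2 = c z.1 z.2) :
    (E.image fun z => c z.1 z.2).card ≤ E.card - D.card := by
  have hsub : (E.image fun z => c z.1 z.2) ⊆ ((E \ D).image fun z => c z.1 z.2) := by
    intro γ hγ
    simp only [mem_image] at hγ ⊢
    obtain ⟨z, hz, rfl⟩ := hγ
    by_cases hzD : z ∈ D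
    · obtain ⟨z', hz', hz'D, hcolr⟩ := hwit z hzD
      exact ⟨z', mem_sdiff.mpr ⟨hz', hz'D⟩, hcolr⟩
    · exact ⟨z, mem_sdiff.mpr ⟨hz, hzD⟩, rfl⟩
  calc (E.image fun z => c z.1 z.2).card
      ≤ ((E \ D).image fun z => c z.1 z.2).card := card_le_card hsub
    _ ≤ (E \ D).card := card_image_le
    _ = E.card - D.card := card_sdiff_of_subset hDE

/-- If a "good" coloring (every `t × s` grid has at least `s*t - p + 1` colors) admits a set
`D` of `p` cells inside a small rectangle, each with an outside same-colored witness, we get a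
contradiction. -/
private lemma noBad {n s t p : ℕ} (c : Fin n → Fin n → ℕ) (hsn : s ≤ n) (htn : t ≤ n)
    (hgood : ∀ A B : Finset (Fin n),
      (A.card = s ∧ B.card = t) ∨ (A.card = t ∧ B.card = s) →
      s * t - p + 1 ≤ ((A ×ˢ B).image fun z => c z.1 z.2).card)
    (R0 S0 : Finset (Fin n)) (D : Finset (Fin n × Fin n))
    (hR : R0.card ≤ t) (hS : S0.card ≤ s) (hD : D ⊆ R0 ×ˢ S0) (hpD : p ≤ D.card)
    (hwit : ∀ z ∈ D, ∃ z', z' ∈ R0 ×ˢ S0 ∧ z' ∉ D ∧ c z'.1 z'.2 = c z.1 z.2) : False := by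
  obtain ⟨A, hRA, hA⟩ := Finset.exists_superset_card_eq hR (by simpa using htn)
  obtain ⟨B, hSB, hB⟩ := Finset.exists_superset_card_eq hS (by simpa using hsn)
  have hprod : R0 ×ˢ S0 ⊆ A ×ˢ B := Finset.product_subset_product hRA hSB
  have hDE : D ⊆ A ×ˢ B := hD.trans hprod
  have him := delImage c (A ×ˢ B) D hDE (fun z hz => by
    obtain ⟨z', h1, h2, h3⟩ := hwit z hz
    exact ⟨z', hprod h1, h2, h3⟩)
  have hcard : (A ×ˢ B).card = t * s := by rw [Finset.card_product, hA, hB]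
  have hg := hgood A B (Or.inr ⟨hA, hB⟩)
  have hDle : D.card ≤ (A ×ˢ B).card := Finset.card_le_card hDE
  rw [hcard] at him hDle
  have hts : t * s = s * t := Nat.mul_comm t s
  rw [hts] at him hDle
  omega

/-- In a good coloring, every color appears at most `p` times in each column. -/
private lemma colDeg {n s t p : ℕ} (c : Fin n → Fin n → ℕ) (hs1 : 1 ≤ s) (hsn : s ≤ n)
    (htn : t ≤ n) (hpt : p + 1 ≤ t)
    (hgood : ∀ A B : Finset (Fin n),
      (A.card = s ∧ B.card = t) ∨ (A.card = t ∧ B.card = s) →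
      s * t - p + 1 ≤ ((A ×ˢ B).image fun z => c z.1 z.2).card)
    (γ : ℕ) (y : Fin n) :
    ((Finset.univ.filter fun a => c a y = γ)).card ≤ p := by
  classical
  by_contra hcon
  push_neg at hcon
  obtain ⟨T, hT, hTcard⟩ := Finset.exists_subset_card_eq (show p + 1 ≤ _ from hcon)
  obtain ⟨a₀, ha₀⟩ := Finset.card_pos.mp (show 0 < T.card by omega)
  have hmem : ∀ a ∈ T, c a y = γ := fun a ha => (Finset.mem_filter.mp (hT ha)).2
  refine noBad c hsn htn hgood T {y} ((T.erase a₀).image fun a => (a, y))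
    (by omega) (by simpa using hs1) ?_ ?_ ?_
  · intro z hz
    simp only [Finset.mem_image] at hz
    obtain ⟨a, ha, rfl⟩ := hz
    exact Finset.mem_product.mpr ⟨Finset.mem_of_mem_erase ha, Finset.mem_singleton_self y⟩
  · have hinj : Function.Injective (fun a : Fin n => (a, y)) := by
      intro a b h
      exact congrArg Prod.fst h
    rw [Finset.card_image_of_injective _ hinj, Finset.card_erase_of_mem ha₀, hTcard]
    omega
  · intro z hz
    simp only [Finset.mem_image] at hz
    obtain ⟨a, ha, rfl⟩ := hz
    refine ⟨(a₀, y), Finset.mem_product.mpr ⟨ha₀, Finset.mem_singleton_self y⟩, ?_, ?_⟩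
    · intro hcontra
      simp only [Finset.mem_image] at hcontra
      obtain ⟨b, hb, heq⟩ := hcontra
      have hba : b = a₀ := congrArg Prod.fst heq
      exact (Finset.mem_erase.mp hb).1 hba
    · simp only
      rw [hmem a (Finset.mem_of_mem_erase ha), hmem a₀ ha₀]

private lemma sumCardFilterComm {α β : Type*} (S : Finset α) (T : Finset β)
    (P : α → β → Prop) [∀ a b, Decidable (P a b)] :
    ∑ a ∈ S, (T.filter fun b => P a b).card = ∑ b ∈ T, (S.filter fun a => P a b).card := by
  simp only [Finset.card_filter]
  exact Finset.sum_comm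

/-- Main combinatorial lemma: a good coloring of `K_{n,n}` uses at least `n² / C` colors. -/
private lemma key {n s t p k : ℕ} (hs : 4 ≤ s) (hst : s ≤ t) (hpt : p + 1 ≤ t)
    (hsp : s ≤ p + 3) (hrows : 2 * p + 4 ≤ s + t) (hn : s + t ≤ n)
    (c : Fin n → Fin n → ℕ) (hc : ∀ a b, c a b < k)
    (hgood : ∀ A B : Finset (Fin n),
      (A.card = s ∧ B.card = t) ∨ (A.card = t ∧ B.card = s) →
      s * t - p + 1 ≤ ((A ×ˢ B).image fun z => c z.1 z.2).card) :
    n * n ≤ k * ((2 * p + s) * ((p + 1) * (p + 1) * (p + 5))) := by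
  classical
  have hsn : s ≤ n := by omega
  have htn : t ≤ n := by omega
  have hnpos : 0 < n := by omega
  have hcol : ∀ γ (y : Fin n), ((Finset.univ.filter fun a => c a y = γ)).card ≤ p :=
    fun γ y => colDeg c (by omega) hsn htn hpt hgood γ y
  set U : Finset ℕ := (Finset.univ : Finset (Fin n × Fin n)).image (fun z => c z.1 z.2) with hU
  have hUk : U.card ≤ k := by
    have hsub : U ⊆ Finset.range k := by
      intro γ hγ
      simp only [hU, Finset.mem_image] at hγ
      obtain ⟨z, _, rfl⟩ := hγ
      exact Finset.mem_range.mpr (hc _ _)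
    simpa using Finset.card_le_card hsub
  have hclassSum : ∑ γ ∈ U, ((Finset.univ : Finset (Fin n × Fin n)).filter
      (fun z => c z.1 z.2 = γ)).card = n * n := by
    have h1 := Finset.card_eq_sum_card_fiberwise
      (s := (Finset.univ : Finset (Fin n × Fin n))) (t := U) (f := fun z => c z.1 z.2)
      (fun z _ => Finset.mem_image_of_mem _ (Finset.mem_univ z))
    rw [← h1]
    simp [Finset.card_univ]
  by_cases hbig : ∃ γ ∈ U, 2 * p + s ≤ ((Finset.univ : Finset (Fin n × Fin n)).filter
      (fun z => c z.1 z.2 = γ)).card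
  swap
  · -- no big class: at most `2p+s-1` cells per color
    push_neg at hbig
    have h1 : n * n ≤ U.card * (2 * p + s) := by
      calc n * n = ∑ γ ∈ U, ((Finset.univ : Finset (Fin n × Fin n)).filter
            (fun z => c z.1 z.2 = γ)).card := hclassSum.symm
        _ ≤ ∑ _γ ∈ U, (2 * p + s) := Finset.sum_le_sum fun γ hγ => le_of_lt (hbig γ hγ)
        _ = U.card * (2 * p + s) := by rw [Finset.sum_const, smul_eq_mul]
    calc n * n ≤ U.card * (2 * p + s) := h1
      _ ≤ k * (2 * p + s) := Nat.mul_le_mul_right _ hUk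
      _ ≤ k * ((2 * p + s) * ((p + 1) * (p + 1) * (p + 5))) := by
          apply Nat.mul_le_mul le_rfl
          exact Nat.le_mul_of_pos_right _ (by positivity)
  obtain ⟨γF, hγFU, hγFbig⟩ := hbig
  by_cases hrich : ∃ x y : Fin n, x ≠ y ∧
      (p + 3 - s) + 2 ≤ (U.filter fun γ => (∃ a, c a x = γ) ∧ (∃ a, c a y = γ)).card
  · -- a rich column pair plus the big class produce a bad grid: contradiction
    exfalso
    obtain ⟨x, y, hxy, hcop⟩ := hrich
    have h1 : p + 3 - s ≤ ((U.filter fun γ => (∃ a, c a x = γ) ∧ (∃ a, c a y = γ)).erase γF).card := by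
      have h2 := Finset.pred_card_le_card_erase
        (s := U.filter fun γ => (∃ a, c a x = γ) ∧ (∃ a, c a y = γ)) (a := γF)
      omega
    obtain ⟨Γ, hΓsub, hΓcard⟩ := Finset.exists_subset_card_eq h1
    have hΓprop : ∀ γ ∈ Γ, γ ≠ γF ∧ (∃ a, c a x = γ) ∧ (∃ a, c a y = γ) := by
      intro γ hγ
      have h2 := Finset.mem_erase.mp (hΓsub hγ)
      exact ⟨h2.1, (Finset.mem_filter.mp h2.2).2⟩
    set fx : ℕ → Fin n := fun γ => if h : ∃ a, c a x = γ then h.choose else ⟨0, hnpos⟩ with hfx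
    set fy : ℕ → Fin n := fun γ => if h : ∃ a, c a y = γ then h.choose else ⟨0, hnpos⟩ with hfy
    have hfxs : ∀ γ ∈ Γ, c (fx γ) x = γ := by
      intro γ hγ
      obtain ⟨-, hx, -⟩ := hΓprop γ hγ
      simp only [hfx, dif_pos hx]
      exact hx.choose_spec
    have hfys : ∀ γ ∈ Γ, c (fy γ) y = γ := by
      intro γ hγ
      obtain ⟨-, -, hy⟩ := hΓprop γ hγ
      simp only [hfy, dif_pos hy]
      exact hy.choose_spec
    set Fc : Finset (Fin n × Fin n) := Finset.univ.filter
      (fun z => c z.1 z.2 = γF ∧ z.2 ≠ x ∧ z.2 ≠ y) with hFc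
    have hcolcells : ∀ w : Fin n, (Finset.univ.filter
        (fun z : Fin n × Fin n => c z.1 z.2 = γF ∧ z.2 = w)).card ≤ p := by
      intro w
      have hsubw : (Finset.univ.filter (fun z : Fin n × Fin n => c z.1 z.2 = γF ∧ z.2 = w)) ⊆
          (Finset.univ.filter fun a => c a w = γF).image (fun a => (a, w)) := by
        intro z hz
        simp only [Finset.mem_filter, Finset.mem_univ, true_and] at hz
        simp only [Finset.mem_image, Finset.mem_filter, Finset.mem_univ, true_and]
        refine ⟨z.1, ?_, ?_⟩
        · rw [← hz.2]; exact hz.1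
        · exact Prod.ext rfl hz.2.symm
      calc (Finset.univ.filter (fun z : Fin n × Fin n => c z.1 z.2 = γF ∧ z.2 = w)).card
          ≤ ((Finset.univ.filter fun a => c a w = γF).image (fun a => (a, w))).card :=
            Finset.card_le_card hsubw
        _ ≤ (Finset.univ.filter fun a => c a w = γF).card := Finset.card_image_le
        _ ≤ p := hcol γF w
    have hFcBig : s - 2 ≤ Fc.card := by
      have hsplit : ((Finset.univ : Finset (Fin n × Fin n)).filter (fun z => c z.1 z.2 = γF)) ⊆
          Fc ∪ (Finset.univ.filter fun z : Fin n × Fin n => c z.1 z.2 = γF ∧ z.2 = x)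
             ∪ (Finset.univ.filter fun z : Fin n × Fin n => c z.1 z.2 = γF ∧ z.2 = y) := by
        intro z hz
        simp only [Finset.mem_filter, Finset.mem_univ, true_and] at hz
        by_cases hzx : z.2 = x
        · exact Finset.mem_union_left _ (Finset.mem_union_right _
            (Finset.mem_filter.mpr ⟨Finset.mem_univ _, hz, hzx⟩))
        by_cases hzy : z.2 = y
        · exact Finset.mem_union_right _
            (Finset.mem_filter.mpr ⟨Finset.mem_univ _, hz, hzy⟩)
        · exact Finset.mem_union_left _ (Finset.mem_union_left _
            (Finset.mem_filter.mpr ⟨Finset.mem_univ _, hz, hzx, hzy⟩))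
      have h4 : 2 * p + s ≤ (Fc
          ∪ (Finset.univ.filter fun z : Fin n × Fin n => c z.1 z.2 = γF ∧ z.2 = x)
          ∪ (Finset.univ.filter fun z : Fin n × Fin n => c z.1 z.2 = γF ∧ z.2 = y)).card :=
        le_trans hγFbig (Finset.card_le_card hsplit)
      have h5 := Finset.card_union_le (Fc
          ∪ (Finset.univ.filter fun z : Fin n × Fin n => c z.1 z.2 = γF ∧ z.2 = x))
          (Finset.univ.filter fun z : Fin n × Fin n => c z.1 z.2 = γF ∧ z.2 = y)
      have h6 := Finset.card_union_le Fc
          (Finset.univ.filter fun z : Fin n × Fin n => c z.1 z.2 = γF ∧ z.2 = x)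
      have h7 := hcolcells x
      have h8 := hcolcells y
      omega
    obtain ⟨Fc', hFc'sub, hFc'card⟩ := Finset.exists_subset_card_eq hFcBig
    have hFc'prop : ∀ z ∈ Fc', c z.1 z.2 = γF ∧ z.2 ≠ x ∧ z.2 ≠ y := by
      intro z hz
      have := Finset.mem_filter.mp (hFc'sub hz)
      exact this.2
    obtain ⟨z₀, hz₀⟩ := Finset.card_pos.mp (show 0 < Fc'.card by omega)
    set R0 : Finset (Fin n) := Fc'.image Prod.fst ∪ Γ.image fx ∪ Γ.image fy with hR0
    set S0 : Finset (Fin n) := Fc'.image Prod.snd ∪ {x, y} with hS0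
    set Dx : Finset (Fin n × Fin n) := Γ.image (fun γ => (fx γ, x)) with hDx
    set D : Finset (Fin n × Fin n) := Fc'.erase z₀ ∪ Dx with hD
    have hDxcard : Dx.card = p + 3 - s := by
      rw [hDx, Finset.card_image_of_injOn, hΓcard]
      intro γ hγ γ' hγ' heq
      have hfeq : fx γ = fx γ' := congrArg Prod.fst heq
      rw [← hfxs γ hγ, ← hfxs γ' hγ', hfeq]
    have hdisj : Disjoint (Fc'.erase z₀) Dx := by
      rw [Finset.disjoint_left]
      intro z hz hzDx
      have h1 := (hFc'prop z (Finset.mem_of_mem_erase hz)).2.1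
      simp only [hDx, Finset.mem_image] at hzDx
      obtain ⟨γ, hγ, heq⟩ := hzDx
      exact h1 (congrArg Prod.snd heq).symm
    have hDcard : D.card = p := by
      rw [hD, Finset.card_union_of_disjoint hdisj, Finset.card_erase_of_mem hz₀,
        hFc'card, hDxcard]
      omega
    have hR0card : R0.card ≤ t := by
      have h1 := Finset.card_union_le (Fc'.image Prod.fst ∪ Γ.image fx) (Γ.image fy)
      have h2 := Finset.card_union_le (Fc'.image Prod.fst) (Γ.image fx)
      have h3 := Finset.card_image_le (s := Fc') (f := Prod.fst)
      have h4 := Finset.card_image_le (s := Γ) (f := fx)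
      have h5 := Finset.card_image_le (s := Γ) (f := fy)
      rw [hFc'card] at h3
      rw [hΓcard] at h4 h5
      rw [hR0]
      omega
    have hS0card : S0.card ≤ s := by
      have h1 := Finset.card_union_le (Fc'.image Prod.snd) ({x, y} : Finset (Fin n))
      have h2 := Finset.card_image_le (s := Fc') (f := Prod.snd)
      have h3 : ({x, y} : Finset (Fin n)).card ≤ 2 := by
        apply le_trans (Finset.card_insert_le x {y})
        simp
      rw [hFc'card] at h2
      rw [hS0]
      omega
    have hDsub : D ⊆ R0 ×ˢ S0 := by
      intro z hz
      rw [hD, Finset.mem_union] at hz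
      rcases hz with hz | hz
      · have hzF := Finset.mem_of_mem_erase hz
        refine Finset.mem_product.mpr ⟨?_, ?_⟩
        · exact Finset.mem_union_left _ (Finset.mem_union_left _
            (Finset.mem_image_of_mem _ hzF))
        · exact Finset.mem_union_left _ (Finset.mem_image_of_mem _ hzF)
      · simp only [hDx, Finset.mem_image] at hz
        obtain ⟨γ, hγ, rfl⟩ := hz
        refine Finset.mem_product.mpr ⟨?_, ?_⟩
        · exact Finset.mem_union_left _ (Finset.mem_union_right _
            (Finset.mem_image_of_mem _ hγ))
        · exact Finset.mem_union_right _ (by simp)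
    have hwit : ∀ z ∈ D, ∃ z', z' ∈ R0 ×ˢ S0 ∧ z' ∉ D ∧ c z'.1 z'.2 = c z.1 z.2 := by
      intro z hz
      rw [hD, Finset.mem_union] at hz
      rcases hz with hz | hz
      · refine ⟨z₀, Finset.mem_product.mpr ⟨Finset.mem_union_left _ (Finset.mem_union_left _
          (Finset.mem_image_of_mem _ hz₀)), Finset.mem_union_left _
          (Finset.mem_image_of_mem _ hz₀)⟩, ?_, ?_⟩
        · rw [hD, Finset.mem_union]
          rintro (h | h)
          · exact (Finset.mem_erase.mp h).1 rfl
          · simp only [hDx, Finset.mem_image] at h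
            obtain ⟨γ, hγ, heq⟩ := h
            exact (hFc'prop z₀ hz₀).2.1 (congrArg Prod.snd heq).symm
        · rw [(hFc'prop z₀ hz₀).1, (hFc'prop z (Finset.mem_of_mem_erase hz)).1]
      · simp only [hDx, Finset.mem_image] at hz
        obtain ⟨γ, hγ, rfl⟩ := hz
        refine ⟨(fy γ, y), Finset.mem_product.mpr ⟨Finset.mem_union_right _
          (Finset.mem_image_of_mem _ hγ), Finset.mem_union_right _ (by simp)⟩, ?_, ?_⟩
        · rw [hD, Finset.mem_union]
          rintro (h | h)
          · exact (hFc'prop _ (Finset.mem_of_mem_erase h)).2.2 rfl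
          · simp only [hDx, Finset.mem_image] at h
            obtain ⟨γ', hγ', heq⟩ := h
            exact hxy (congrArg Prod.snd heq)
        · simp only
          rw [hfys γ hγ, hfxs γ hγ]
    exact noBad c hsn htn hgood R0 S0 D hR0card hS0card hDsub (by omega) hwit
  · -- no rich pair: Cauchy–Schwarz counting
    push_neg at hrich
    set cols : ℕ → Finset (Fin n) := fun γ => Finset.univ.filter fun yy => ∃ a, c a yy = γ
      with hcols
    set N := ∑ γ ∈ U, (cols γ).card with hN
    have hColLow : ∀ yy : Fin n, n ≤ p * (U.filter fun γ => ∃ a, c a yy = γ).card := by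
      intro yy
      set Uy := (Finset.univ : Finset (Fin n)).image (fun a => c a yy) with hUy
      have h1 : (Finset.univ : Finset (Fin n)).card
          = ∑ γ ∈ Uy, (Finset.univ.filter fun a => c a yy = γ).card :=
        Finset.card_eq_sum_card_fiberwise (fun a _ => Finset.mem_image_of_mem _ (Finset.mem_univ a))
      have h2 : ∑ γ ∈ Uy, (Finset.univ.filter fun a => c a yy = γ).card ≤ Uy.card * p := by
        calc ∑ γ ∈ Uy, (Finset.univ.filter fun a => c a yy = γ).card
            ≤ ∑ _γ ∈ Uy, p := Finset.sum_le_sum fun γ _ => hcol γ yy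
          _ = Uy.card * p := by rw [Finset.sum_const, smul_eq_mul]
      have h3 : Uy ⊆ U.filter fun γ => ∃ a, c a yy = γ := by
        intro γ hγ
        simp only [hUy, Finset.mem_image] at hγ
        obtain ⟨a, -, rfl⟩ := hγ
        refine Finset.mem_filter.mpr ⟨?_, ⟨a, rfl⟩⟩
        simp only [hU, Finset.mem_image]
        exact ⟨(a, yy), Finset.mem_univ _, rfl⟩
      have h4 := Finset.card_le_card h3
      have h5 : (Finset.univ : Finset (Fin n)).card = n := by simp
      calc n = (Finset.univ : Finset (Fin n)).card := h5.symm
        _ ≤ Uy.card * p := by rw [h1]; exact h2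
        _ ≤ (U.filter fun γ => ∃ a, c a yy = γ).card * p := Nat.mul_le_mul_right _ h4
        _ = p * (U.filter fun γ => ∃ a, c a yy = γ).card := Nat.mul_comm _ _
    have hNlow : n * n ≤ p * N := by
      have hcomm : N = ∑ yy ∈ (Finset.univ : Finset (Fin n)),
          (U.filter fun γ => ∃ a, c a yy = γ).card := by
        rw [hN]
        simp only [hcols]
        exact sumCardFilterComm U Finset.univ (fun γ yy => ∃ a, c a yy = γ)
      calc n * n = ∑ _yy ∈ (Finset.univ : Finset (Fin n)), n := by
            rw [Finset.sum_const, smul_eq_mul, Finset.card_univ, Fintype.card_fin]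
        _ ≤ ∑ yy ∈ (Finset.univ : Finset (Fin n)),
              p * (U.filter fun γ => ∃ a, c a yy = γ).card :=
            Finset.sum_le_sum fun yy _ => hColLow yy
        _ = p * ∑ yy ∈ (Finset.univ : Finset (Fin n)),
              (U.filter fun γ => ∃ a, c a yy = γ).card := by rw [Finset.mul_sum]
        _ = p * N := by rw [hcomm]
    have hNup : N ≤ n * n := by
      rw [hN, ← hclassSum]
      apply Finset.sum_le_sum
      intro γ _
      apply Finset.card_le_card_of_injOn
        (fun yy => ((if h : ∃ a, c a yy = γ then h.choose else ⟨0, hnpos⟩ : Fin n), yy))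
      · intro yy hyy
        have hyy' : ∃ a, c a yy = γ := by
          have := Finset.mem_filter.mp hyy
          exact this.2
        simp only [Finset.mem_filter, Finset.mem_univ, true_and]
        simp only [dif_pos hyy']
        exact Finset.mem_filter.mpr ⟨Finset.mem_univ _, hyy'.choose_spec⟩
      · intro a _ b _ hab
        exact congrArg Prod.snd hab
    have hSQ : ∑ γ ∈ U, (cols γ).card * (cols γ).card ≤ N + n * n * ((p + 3 - s) + 1) := by
      have hstep1 : ∑ γ ∈ U, (cols γ).card * (cols γ).card
          = ∑ xx ∈ (Finset.univ : Finset (Fin n)),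
              ∑ γ ∈ U.filter (fun γ => ∃ a, c a xx = γ), (cols γ).card := by
        have e1 : ∀ γ ∈ U, (cols γ).card * (cols γ).card = ∑ _xx ∈ cols γ, (cols γ).card := by
          intro γ _
          rw [Finset.sum_const, smul_eq_mul]
        rw [Finset.sum_congr rfl e1]
        have e2 : ∀ γ ∈ U, ∑ _xx ∈ cols γ, (cols γ).card
            = ∑ xx ∈ (Finset.univ : Finset (Fin n)),
                if (∃ a, c a xx = γ) then (cols γ).card else 0 := by
          intro γ _
          conv_lhs => rw [hcols]
          rw [Finset.sum_filter]
        rw [Finset.sum_congr rfl e2, Finset.sum_comm]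
        apply Finset.sum_congr rfl
        intro xx _
        rw [Finset.sum_filter]
      rw [hstep1]
      have hperx : ∀ xx : Fin n, ∑ γ ∈ U.filter (fun γ => ∃ a, c a xx = γ), (cols γ).card
          ≤ (U.filter (fun γ => ∃ a, c a xx = γ)).card + n * ((p + 3 - s) + 1) := by
        intro xx
        set Ux := U.filter (fun γ => ∃ a, c a xx = γ) with hUx
        have hb : ∀ γ ∈ Ux, (cols γ).card
            ≤ 1 + ((Finset.univ.erase xx).filter fun yy => ∃ a, c a yy = γ).card := by
          intro γ hγ
          have hxx : xx ∈ cols γ := by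
            simp only [hcols, Finset.mem_filter, Finset.mem_univ, true_and]
            exact (Finset.mem_filter.mp hγ).2
          have h1 := Finset.card_erase_add_one hxx
          have h2 : (cols γ).erase xx ⊆ (Finset.univ.erase xx).filter
              fun yy => ∃ a, c a yy = γ := by
            intro yy hyy
            rw [Finset.mem_erase] at hyy
            refine Finset.mem_filter.mpr ⟨Finset.mem_erase.mpr ⟨hyy.1, Finset.mem_univ _⟩, ?_⟩
            have := Finset.mem_filter.mp hyy.2
            exact this.2
          have h3 := Finset.card_le_card h2
          omega
        calc ∑ γ ∈ Ux, (cols γ).card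
            ≤ ∑ γ ∈ Ux, (1 + ((Finset.univ.erase xx).filter fun yy => ∃ a, c a yy = γ).card) :=
              Finset.sum_le_sum hb
          _ = Ux.card + ∑ γ ∈ Ux, ((Finset.univ.erase xx).filter
                fun yy => ∃ a, c a yy = γ).card := by
              rw [Finset.sum_add_distrib, Finset.sum_const, smul_eq_mul, mul_one]
          _ ≤ Ux.card + n * ((p + 3 - s) + 1) := by
              have hcomm2 : ∑ γ ∈ Ux, ((Finset.univ.erase xx).filter
                    fun yy => ∃ a, c a yy = γ).card
                  = ∑ yy ∈ Finset.univ.erase xx, (Ux.filter fun γ => ∃ a, c a yy = γ).card :=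
                sumCardFilterComm Ux (Finset.univ.erase xx) (fun γ yy => ∃ a, c a yy = γ)
              rw [hcomm2]
              apply Nat.add_le_add_left
              have hbnd : ∀ yy ∈ Finset.univ.erase xx,
                  (Ux.filter fun γ => ∃ a, c a yy = γ).card ≤ (p + 3 - s) + 1 := by
                intro yy hyy
                have hne : xx ≠ yy := fun h => (Finset.mem_erase.mp hyy).1 h.symm
                have hr := hrich xx yy hne
                have hsub : Ux.filter (fun γ => ∃ a, c a yy = γ) ⊆
                    U.filter fun γ => (∃ a, c a xx = γ) ∧ (∃ a, c a yy = γ) := by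
                  intro γ hγ
                  have hh1 := Finset.mem_filter.mp hγ
                  have hh2 := Finset.mem_filter.mp hh1.1
                  exact Finset.mem_filter.mpr ⟨hh2.1, hh2.2, hh1.2⟩
                have h3 := Finset.card_le_card hsub
                omega
              calc ∑ yy ∈ Finset.univ.erase xx, (Ux.filter fun γ => ∃ a, c a yy = γ).card
                  ≤ ∑ _yy ∈ Finset.univ.erase xx, ((p + 3 - s) + 1) := Finset.sum_le_sum hbnd
                _ = (Finset.univ.erase xx).card * ((p + 3 - s) + 1) := by
                    rw [Finset.sum_const, smul_eq_mul]
                _ ≤ n * ((p + 3 - s) + 1) := by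
                    apply Nat.mul_le_mul_right
                    calc (Finset.univ.erase xx).card ≤ (Finset.univ : Finset (Fin n)).card :=
                        Finset.card_erase_le
                      _ = n := by simp
      calc ∑ xx ∈ (Finset.univ : Finset (Fin n)),
            ∑ γ ∈ U.filter (fun γ => ∃ a, c a xx = γ), (cols γ).card
          ≤ ∑ xx ∈ (Finset.univ : Finset (Fin n)),
              ((U.filter (fun γ => ∃ a, c a xx = γ)).card + n * ((p + 3 - s) + 1)) :=
            Finset.sum_le_sum fun xx _ => hperx xx
        _ = (∑ xx ∈ (Finset.univ : Finset (Fin n)),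
              (U.filter (fun γ => ∃ a, c a xx = γ)).card) + n * (n * ((p + 3 - s) + 1)) := by
            rw [Finset.sum_add_distrib, Finset.sum_const, smul_eq_mul, Finset.card_univ,
              Fintype.card_fin]
        _ = N + n * (n * ((p + 3 - s) + 1)) := by
            have hcomm3 : N = ∑ xx ∈ (Finset.univ : Finset (Fin n)),
                (U.filter fun γ => ∃ a, c a xx = γ).card := by
              rw [hN]
              simp only [hcols]
              exact sumCardFilterComm U Finset.univ (fun γ yy => ∃ a, c a yy = γ)
            rw [← hcomm3]
        _ = N + n * n * ((p + 3 - s) + 1) := by ring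
    have hCS : N * N ≤ U.card * ∑ γ ∈ U, (cols γ).card * (cols γ).card := by
      have h := sq_sum_le_card_mul_sum_sq (s := U) (f := fun γ => (cols γ).card)
      calc N * N = (∑ γ ∈ U, (cols γ).card) ^ 2 := by rw [hN]; ring
        _ ≤ U.card * ∑ γ ∈ U, ((cols γ).card) ^ 2 := h
        _ = U.card * ∑ γ ∈ U, (cols γ).card * (cols γ).card := by
            congr 1
            apply Finset.sum_congr rfl
            intro γ _
            ring
    have hfin1 : N * N ≤ k * (n * n * ((p + 3 - s) + 2)) := by
      calc N * N ≤ U.card * ∑ γ ∈ U, (cols γ).card * (cols γ).card := hCS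
        _ ≤ k * ∑ γ ∈ U, (cols γ).card * (cols γ).card := Nat.mul_le_mul_right _ hUk
        _ ≤ k * (N + n * n * ((p + 3 - s) + 1)) := Nat.mul_le_mul le_rfl hSQ
        _ ≤ k * (n * n + n * n * ((p + 3 - s) + 1)) := by
            apply Nat.mul_le_mul le_rfl
            omega
        _ = k * (n * n * ((p + 3 - s) + 2)) := by ring
    have hfin2 : (n * n) * (n * n) ≤ (k * ((p * p) * ((p + 3 - s) + 2))) * (n * n) := by
      calc (n * n) * (n * n) ≤ (p * N) * (p * N) := Nat.mul_le_mul hNlow hNlow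
        _ = (p * p) * (N * N) := by ring
        _ ≤ (p * p) * (k * (n * n * ((p + 3 - s) + 2))) := Nat.mul_le_mul le_rfl hfin1
        _ = (k * ((p * p) * ((p + 3 - s) + 2))) * (n * n) := by ring
    have hfin3 : n * n ≤ k * ((p * p) * ((p + 3 - s) + 2)) :=
      Nat.le_of_mul_le_mul_right hfin2 (by positivity)
    calc n * n ≤ k * ((p * p) * ((p + 3 - s) + 2)) := hfin3
      _ ≤ k * ((2 * p + s) * ((p + 1) * (p + 1) * (p + 5))) := by
          apply Nat.mul_le_mul le_rfl
          have h1 : (p * p) * ((p + 3 - s) + 2) ≤ (p + 1) * (p + 1) * (p + 5) :=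
            Nat.mul_le_mul (Nat.mul_le_mul (by omega) (by omega)) (by omega)
          calc (p * p) * ((p + 3 - s) + 2) ≤ (p + 1) * (p + 1) * (p + 5) := h1
            _ ≤ (2 * p + s) * ((p + 1) * (p + 1) * (p + 5)) :=
              Nat.le_mul_of_pos_left _ (by omega)

/-- For `t ≥ s`: (a) if `s ≥ 4` and at least one of `s, t` is even, then
`r(K_{n,n}, K_{s,t}, st - ⌊(s+t)/2⌋ + 3) = Θ(n²)`; (b) if `s ≥ 5` and both `s` and `t`
are odd, then `r(K_{n,n}, K_{s,t}, st - ⌊(s+t)/2⌋ + 4) = Θ(n²)`. -/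
theorem stmt_6 (s t : ℕ) (hst : s ≤ t) :
    (4 ≤ s → (Even s ∨ Even t) →
      ∃ c : ℝ, 0 < c ∧ ∃ n₀ : ℕ, ∀ n : ℕ, n₀ ≤ n →
        c * (n : ℝ) ^ 2 ≤ (rBip n s t (s * t - (s + t) / 2 + 3) : ℝ) ∧
        (rBip n s t (s * t - (s + t) / 2 + 3) : ℝ) ≤ (n : ℝ) ^ 2) ∧
    (5 ≤ s → Odd s → Odd t →
      ∃ c : ℝ, 0 < c ∧ ∃ n₀ : ℕ, ∀ n : ℕ, n₀ ≤ n →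
        c * (n : ℝ) ^ 2 ≤ (rBip n s t (s * t - (s + t) / 2 + 4) : ℝ) ∧
        (rBip n s t (s * t - (s + t) / 2 + 4) : ℝ) ≤ (n : ℝ) ^ 2) := by
  have main : ∀ q p : ℕ, 4 ≤ s → p + 1 ≤ t → s ≤ p + 3 → 2 * p + 4 ≤ s + t →
      q = s * t - p + 1 → q ≤ s * t →
      ∃ cc : ℝ, 0 < cc ∧ ∃ n₀ : ℕ, ∀ n : ℕ, n₀ ≤ n →
        cc * (n : ℝ) ^ 2 ≤ (rBip n s t q : ℝ) ∧ (rBip n s t q : ℝ) ≤ (n : ℝ) ^ 2 := by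
    intro q p hs hpt hsp hrows hq hqst
    have hCpos : 0 < (2 * p + s) * ((p + 1) * (p + 1) * (p + 5)) := by positivity
    refine ⟨1 / (((2 * p + s) * ((p + 1) * (p + 1) * (p + 5)) : ℕ) : ℝ), by positivity, s + t, ?_⟩
    intro n hn
    have hnpos : 0 < n := by omega
    have hmemUB : n * n ∈ {k : ℕ | ∃ c : Fin n → Fin n → ℕ,
        (∀ a b, c a b < k) ∧
        ∀ A B : Finset (Fin n),
          (A.card = s ∧ B.card = t) ∨ (A.card = t ∧ B.card = s) →
          q ≤ ((A ×ˢ B).image fun p => c p.1 p.2).card} := by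
      refine ⟨fun a b => b.1 + a.1 * n, ?_, ?_⟩
      · intro a b
        have ha : a.1 < n := a.isLt
        have hb : b.1 < n := b.isLt
        calc b.1 + a.1 * n < n + a.1 * n := by omega
          _ = (a.1 + 1) * n := by ring
          _ ≤ n * n := Nat.mul_le_mul_right _ (by omega)
      · intro A B hAB
        have hinj : Set.InjOn (fun z : Fin n × Fin n =>
            (fun a b : Fin n => b.1 + a.1 * n) z.1 z.2) ↑(A ×ˢ B) := by
          intro u _ v _ huv
          have huv' : u.2.1 + u.1.1 * n = v.2.1 + v.1.1 * n := huv
          have hu2 : u.2.1 < n := u.2.isLt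
          have hv2 : v.2.1 < n := v.2.isLt
          have hmod : u.2.1 = v.2.1 := by
            have h := congrArg (· % n) huv'
            simpa [Nat.add_mul_mod_self_right, Nat.mod_eq_of_lt hu2,
              Nat.mod_eq_of_lt hv2] using h
          have hdiv : u.1.1 = v.1.1 := by
            have h := congrArg (· / n) huv'
            simpa [Nat.add_mul_div_right _ _ hnpos, Nat.div_eq_of_lt hu2,
              Nat.div_eq_of_lt hv2] using h
          exact Prod.ext (Fin.ext hdiv) (Fin.ext hmod)
        rw [Finset.card_image_of_injOn hinj, Finset.card_product]
        rcases hAB with ⟨hA, hB⟩ | ⟨hA, hB⟩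
        · rw [hA, hB]; exact hqst
        · rw [hA, hB, Nat.mul_comm]; exact hqst
    have hne : {k : ℕ | ∃ c : Fin n → Fin n → ℕ,
        (∀ a b, c a b < k) ∧
        ∀ A B : Finset (Fin n),
          (A.card = s ∧ B.card = t) ∨ (A.card = t ∧ B.card = s) →
          q ≤ ((A ×ˢ B).image fun p => c p.1 p.2).card}.Nonempty := ⟨n * n, hmemUB⟩
    have hUB : rBip n s t q ≤ n * n := Nat.sInf_le hmemUB
    have hInfMem := Nat.sInf_mem hne
    obtain ⟨c0, hc0, hgood0⟩ := hInfMem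
    have hgood0' : ∀ A B : Finset (Fin n),
        (A.card = s ∧ B.card = t) ∨ (A.card = t ∧ B.card = s) →
        s * t - p + 1 ≤ ((A ×ˢ B).image fun z => c0 z.1 z.2).card := by
      intro A B hAB
      rw [← hq]
      exact hgood0 A B hAB
    have hkey := key hs hst hpt hsp hrows hn c0 hc0 hgood0'
    have hCR : (0 : ℝ) < (((2 * p + s) * ((p + 1) * (p + 1) * (p + 5)) : ℕ) : ℝ) := by
      exact_mod_cast hCpos
    constructor
    · rw [div_mul_eq_mul_div, one_mul, div_le_iff₀ hCR]
      have h2 : ((n * n : ℕ) : ℝ)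
          ≤ ((rBip n s t q * ((2 * p + s) * ((p + 1) * (p + 1) * (p + 5))) : ℕ) : ℝ) := by
        exact_mod_cast hkey
      push_cast at h2 ⊢
      nlinarith [h2]
    · have h2 : ((rBip n s t q : ℕ) : ℝ) ≤ ((n * n : ℕ) : ℝ) := by exact_mod_cast hUB
      push_cast at h2
      nlinarith [h2]
  constructor
  · intro hs _heven
    have hm1 : t ≤ s * t := Nat.le_mul_of_pos_left t (by omega)
    exact main (s * t - (s + t) / 2 + 3) ((s + t) / 2 - 2) hs (by omega) (by omega)
      (by omega) (by omega) (by omega)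
  · intro hs _ _
    have hm1 : t ≤ s * t := Nat.le_mul_of_pos_left t (by omega)
    exact main (s * t - (s + t) / 2 + 4) ((s + t) / 2 - 3) (by omega) (by omega) (by omega)
      (by omega) (by omega) (by omega)
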